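/- arXiv:1512.03034 — 6 statements merged into one kernel-verified Lean document; each statement's English description precedes it below -/
import Mathlib

section
/- Let P be an I×J matrix with positive entries such that each column sums to 1. Then for any vectors x, z ∈ ℝ^J with positive entries, KL(x,z) ≥ KL(Px, Pz). -/
/-- Scalar Kullback–Leibler distance. -/
noncomputable def KL (s t : ℝ) : ℝ := s * Real.log (s / t) + t - s

/-- Log-sum inequality. -/
lemma log_sum_ineq {J : ℕ} (a b : Fin J → ℝ) (ha : ∀ j, 0 < a j) (hb : ∀ j, 0 < b j) :
    (∑ j, a j) * Real.log ((∑ j, a j) / (∑ j, b j)) ≤ ∑ j, a j * Real.log (a j / b j) := by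
  rcases Nat.eq_zero_or_pos J with hJ | hJ
  · subst hJ; simp
  have hA : 0 < ∑ j, a j := Finset.sum_pos (fun j _ => ha j) (by simp [Finset.univ_nonempty_iff, Fin.pos_iff_nonempty.mp hJ])
  have hB : 0 < ∑ j, b j := Finset.sum_pos (fun j _ => hb j) (by simp [Finset.univ_nonempty_iff, Fin.pos_iff_nonempty.mp hJ])
  have jensen := Real.convexOn_mul_log.map_sum_le (t := Finset.univ)
    (w := fun j => b j / ∑ j, b j) (p := fun j => a j / b j)
    (fun j _ => div_nonneg (hb j).le hB.le)
    (by rw [← Finset.sum_div]; field_simp)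
    (fun j _ => (div_pos (ha j) (hb j)).le)
  have hsum : ∑ j, (b j / ∑ j', b j') • (a j / b j) = (∑ j, a j) / (∑ j', b j') := by
    rw [show (∑ j, (b j / ∑ j', b j') • (a j / b j)) = ∑ j, a j / ∑ j', b j' from
      Finset.sum_congr rfl fun j _ => by
        rw [smul_eq_mul]; rw [div_mul_div_comm, mul_comm (b j), mul_div_mul_right _ _ (hb j).ne'],
      ← Finset.sum_div]
  rw [hsum] at jensen
  have := mul_le_mul_of_nonneg_left jensen hB.le
  calc (∑ j, a j) * Real.log ((∑ j, a j) / (∑ j, b j))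
      = (∑ j', b j') * ((∑ j, a j) / (∑ j', b j') * Real.log ((∑ j, a j) / (∑ j', b j'))) := by
        field_simp
    _ ≤ (∑ j', b j') * ∑ j, (b j / ∑ j', b j') • (a j / b j * Real.log (a j / b j)) := this
    _ = ∑ j, a j * Real.log (a j / b j) := by
        rw [Finset.mul_sum]
        refine Finset.sum_congr rfl fun j _ => ?_
        have := (hb j).ne'
        field_simp
        rw [smul_eq_mul, ← mul_assoc, mul_div_cancel₀ _ hB.ne', mul_div_cancel₀ _ this]

theorem stmt_3 {I J : ℕ} (P : Matrix (Fin I) (Fin J) ℝ)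
    (hP : ∀ i j, 0 < P i j) (hcol : ∀ j, ∑ i, P i j = 1)
    (x z : Fin J → ℝ) (hx : ∀ j, 0 < x j) (hz : ∀ j, 0 < z j) :
    ∑ i, KL (P.mulVec x i) (P.mulVec z i) ≤ ∑ j, KL (x j) (z j) := by
  simp only [KL, Matrix.mulVec, dotProduct]
  have hsx : ∑ i, ∑ j, P i j * x j = ∑ j, x j := by
    rw [Finset.sum_comm]
    exact Finset.sum_congr rfl fun j _ => by rw [← Finset.sum_mul, hcol, one_mul]
  have hsz : ∑ i, ∑ j, P i j * z j = ∑ j, z j := by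
    rw [Finset.sum_comm]
    exact Finset.sum_congr rfl fun j _ => by rw [← Finset.sum_mul, hcol, one_mul]
  have key : ∑ i, (∑ j, P i j * x j) * Real.log ((∑ j, P i j * x j) / (∑ j, P i j * z j))
      ≤ ∑ j, x j * Real.log (x j / z j) := by
    have h1 : ∀ i, (∑ j, P i j * x j) * Real.log ((∑ j, P i j * x j) / (∑ j, P i j * z j))
        ≤ ∑ j, P i j * x j * Real.log (x j / z j) := by
      intro i
      have := log_sum_ineq (fun j => P i j * x j) (fun j => P i j * z j)
        (fun j => mul_pos (hP i j) (hx j)) (fun j => mul_pos (hP i j) (hz j))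
      refine this.trans_eq (Finset.sum_congr rfl fun j _ => ?_)
      rw [mul_div_mul_left _ _ (hP i j).ne']
    calc ∑ i, (∑ j, P i j * x j) * Real.log ((∑ j, P i j * x j) / (∑ j, P i j * z j))
        ≤ ∑ i, ∑ j, P i j * x j * Real.log (x j / z j) := Finset.sum_le_sum fun i _ => h1 i
      _ = ∑ j, x j * Real.log (x j / z j) := by
          rw [Finset.sum_comm]
          refine Finset.sum_congr rfl fun j _ => ?_
          rw [← Finset.sum_mul, ← Finset.sum_mul, hcol, one_mul]
  simp only [Finset.sum_add_distrib, Finset.sum_sub_distrib, hsx, hsz]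
  linarith
end

section
/- Suppose an iterative algorithm for minimizing f : X → ℝ generates a sequence {x^k} with f(x^k) decreasing to β* and there exist nonnegative functions h_k : X → ℝ such that for all x ∈ X and all k, h_k(x) + f(x) ≥ h_{k+1}(x) + f(x^k). Then β* = inf_{x∈X} f(x). -/
theorem stmt_4 {X : Type*} [Nonempty X] (f : X → ℝ) (x : ℕ → X)
    (h : ℕ → X → ℝ) (βstar : ℝ)
    (hmono : ∀ k, f (x (k + 1)) ≤ f (x k))
    (hlim : Filter.Tendsto (fun k => f (x k)) Filter.atTop (nhds βstar))
    (hnonneg : ∀ k z, 0 ≤ h k z)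
    (hsumma2 : ∀ k z, h (k + 1) z + f (x k) ≤ h k z + f z) :
    IsGLB (Set.range f) βstar := by
  have hanti : Antitone fun k => f (x k) := antitone_nat_of_succ_le hmono
  have hge : ∀ k, βstar ≤ f (x k) := by
    intro k
    refine le_of_tendsto hlim ?_
    filter_upwards [Filter.eventually_ge_atTop k] with n hn
    exact hanti hn
  constructor
  · rintro _ ⟨z, rfl⟩
    by_contra hc
    push_neg at hc
    set δ := βstar - f z with hδ
    have hδpos : 0 < δ := by simp [hδ]; linarith
    have key : ∀ k, h k z ≤ h 0 z - k * δ := by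
      intro k
      induction k with
      | zero => simp
      | succ n ih =>
        have := hsumma2 n z
        have := hge n
        push_cast
        nlinarith
      
    obtain ⟨k, hk⟩ := exists_nat_gt (h 0 z / δ)
    have h1 := key k
    have h2 := hnonneg k z
    have : h 0 z / δ * δ < k * δ := by
      exact mul_lt_mul_of_pos_right hk hδpos
    rw [div_mul_cancel₀ _ (ne_of_gt hδpos)] at this
    linarith
  · intro b hb
    refine ge_of_tendsto hlim ?_
    filter_upwards with n
    exact hb ⟨x n, rfl⟩
end

section
/- Let A be a real I×J matrix with c_j = ∑_i A_{i,j}² > 0, b ∈ ℝ^I, r(x)_{i,j} = A_{i,j}x_j + (1/J)(b_i - (Ax)_i). Then for all x, z ∈ ℝ^J: E(r(x), r(z)) = ∑_j c_j(x_j - z_j)² - (1/J)∑_i ((Ax)_i - (Az)_i)², where E(u,v) = ∑_{i,j}(u_{i,j} - v_{i,j})². -/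
theorem stmt_13 {I J : ℕ} (hJ : 0 < J) (A : Matrix (Fin I) (Fin J) ℝ)
    (b : Fin I → ℝ)
    (c : Fin J → ℝ) (hc : ∀ j, c j = ∑ i, A i j ^ 2) (hcpos : ∀ j, 0 < c j)
    (r : (Fin J → ℝ) → Fin I → Fin J → ℝ)
    (hr : ∀ x i j, r x i j = A i j * x j + (1 / (J : ℝ)) * (b i - A.mulVec x i))
    (x z : Fin J → ℝ) :
    ∑ i, ∑ j, (r x i j - r z i j) ^ 2 =
      (∑ j, c j * (x j - z j) ^ 2) -
        (1 / (J : ℝ)) * ∑ i, (A.mulVec x i - A.mulVec z i) ^ 2 := by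
  have hJ' : (J : ℝ) ≠ 0 := Nat.cast_ne_zero.2 hJ.ne'
  have key : ∀ i, ∑ j, (r x i j - r z i j) ^ 2
      = (∑ j, A i j ^ 2 * (x j - z j) ^ 2)
        - (1 / (J : ℝ)) * (A.mulVec x i - A.mulVec z i) ^ 2 := by
    intro i
    set d : ℝ := A.mulVec x i - A.mulVec z i with hdd
    have hd : ∑ j, A i j * (x j - z j) = d := by
      simp [hdd, Matrix.mulVec, dotProduct, mul_sub, Finset.sum_sub_distrib]
    have h1 : ∀ j, r x i j - r z i j = A i j * (x j - z j) - (1 / (J : ℝ)) * d := by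
      intro j; rw [hr, hr, hdd]; ring
    calc ∑ j, (r x i j - r z i j) ^ 2
        = ∑ j, (A i j ^ 2 * (x j - z j) ^ 2
            - 2 * (1 / (J : ℝ)) * d * (A i j * (x j - z j))
            + (1 / (J : ℝ) * d) ^ 2) := by
          refine Finset.sum_congr rfl fun j _ => ?_
          rw [h1]; ring
      _ = (∑ j, A i j ^ 2 * (x j - z j) ^ 2)
            - 2 * (1 / (J : ℝ)) * d * (∑ j, A i j * (x j - z j))
            + (J : ℝ) * (1 / (J : ℝ) * d) ^ 2 := by
          rw [Finset.sum_add_distrib, Finset.sum_sub_distrib, ← Finset.mul_sum,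
            Finset.sum_const, Finset.card_fin, nsmul_eq_mul]
      _ = (∑ j, A i j ^ 2 * (x j - z j) ^ 2) - (1 / (J : ℝ)) * d ^ 2 := by
          rw [hd]; field_simp; ring
  calc ∑ i, ∑ j, (r x i j - r z i j) ^ 2
      = ∑ i, ((∑ j, A i j ^ 2 * (x j - z j) ^ 2)
          - (1 / (J : ℝ)) * (A.mulVec x i - A.mulVec z i) ^ 2) :=
        Finset.sum_congr rfl fun i _ => key i
    _ = (∑ j, c j * (x j - z j) ^ 2)
          - (1 / (J : ℝ)) * ∑ i, (A.mulVec x i - A.mulVec z i) ^ 2 := by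
        rw [Finset.sum_sub_distrib, ← Finset.mul_sum, Finset.sum_comm]
        congr 1
        refine Finset.sum_congr rfl fun j _ => ?_
        rw [hc, ← Finset.sum_mul]
end

section
/- Let P be an I×J matrix with positive entries and column sums equal to 1, y ∈ ℝ^I with positive entries, and x ∈ ℝ^J with positive entries. Define the SMART operator (Sx)_j = x_j·exp(∑_i P_{i,j} log(y_i/(Px)_i)). Then ∑_j (Sx)_j ≤ ∑_i y_i. -/
theorem stmt_14 {I J : ℕ} (P : Matrix (Fin I) (Fin J) ℝ)
    (hP : ∀ i j, 0 < P i j) (hcol : ∀ j, ∑ i, P i j = 1)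
    (y : Fin I → ℝ) (hy : ∀ i, 0 < y i)
    (x : Fin J → ℝ) (hx : ∀ j, 0 < x j) :
    ∑ j, x j * Real.exp (∑ i, P i j * Real.log (y i / P.mulVec x i)) ≤
      ∑ i, y i := by
  rcases Nat.eq_zero_or_pos J with h0 | h0
  · subst h0
    simp only [Finset.univ_eq_empty, Finset.sum_empty]
    exact Finset.sum_nonneg fun i _ => (hy i).le
  have hPx : ∀ i, 0 < P.mulVec x i := fun i =>
    Finset.sum_pos (fun j _ => mul_pos (hP i j) (hx j)) ⟨⟨0, h0⟩, Finset.mem_univ _⟩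
  have key : ∀ j, Real.exp (∑ i, P i j * Real.log (y i / P.mulVec x i)) ≤
      ∑ i, P i j * (y i / P.mulVec x i) := by
    intro j
    have := convexOn_exp.map_sum_le (t := Finset.univ) (w := fun i => P i j)
      (p := fun i => Real.log (y i / P.mulVec x i))
      (fun i _ => (hP i j).le) (hcol j) (fun i _ => Set.mem_univ _)
    simpa [smul_eq_mul, Real.exp_log (div_pos (hy _) (hPx _))] using this
  calc ∑ j, x j * Real.exp (∑ i, P i j * Real.log (y i / P.mulVec x i))
      ≤ ∑ j, x j * ∑ i, P i j * (y i / P.mulVec x i) :=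
        Finset.sum_le_sum fun j _ => mul_le_mul_of_nonneg_left (key j) (hx j).le
    _ = ∑ i, (y i / P.mulVec x i) * P.mulVec x i := by
        simp only [Finset.mul_sum]
        rw [Finset.sum_comm]
        congr 1; ext i
        simp only [Matrix.mulVec, dotProduct, Finset.mul_sum]
        congr 1; ext j; ring
    _ = ∑ i, y i := by
        congr 1; ext i; exact div_mul_cancel₀ _ (hPx i).ne'
end

section
/- Let P be an I×J matrix with nonnegative entries whose columns each sum to 1. Then for all nonnegative vectors x, z ∈ ℝ^J: ∑_i √((Px)_i(Pz)_i) ≥ ∑_j √(x_j z_j). -/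
theorem stmt_17 {I J : ℕ} (P : Matrix (Fin I) (Fin J) ℝ)
    (hP : ∀ i j, 0 ≤ P i j) (hcol : ∀ j, ∑ i, P i j = 1)
    (x z : Fin J → ℝ) (hx : ∀ j, 0 ≤ x j) (hz : ∀ j, 0 ≤ z j) :
    ∑ j, Real.sqrt (x j * z j) ≤
      ∑ i, Real.sqrt (P.mulVec x i * P.mulVec z i) := by
  have key : ∑ j, Real.sqrt (x j * z j)
      = ∑ i, ∑ j, Real.sqrt (P i j * x j) * Real.sqrt (P i j * z j) := by
    rw [Finset.sum_comm]
    refine Finset.sum_congr rfl fun j _ => ?_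
    have : ∀ i : Fin I, Real.sqrt (P i j * x j) * Real.sqrt (P i j * z j)
        = P i j * Real.sqrt (x j * z j) := by
      intro i
      rw [Real.sqrt_mul (hP i j), Real.sqrt_mul (hP i j), Real.sqrt_mul (hx j)]
      have := Real.mul_self_sqrt (hP i j)
      linear_combination Real.sqrt (x j) * Real.sqrt (z j) * this
    simp only [this, ← Finset.sum_mul, hcol j, one_mul]
  rw [key]
  refine Finset.sum_le_sum fun i _ => ?_
  have h1 := Real.sum_sqrt_mul_sqrt_le Finset.univ
    (f := fun j => P i j * x j) (g := fun j => P i j * z j)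
    (fun j => mul_nonneg (hP i j) (hx j)) (fun j => mul_nonneg (hP i j) (hz j))
  calc ∑ j, Real.sqrt (P i j * x j) * Real.sqrt (P i j * z j)
      ≤ Real.sqrt (∑ j, P i j * x j) * Real.sqrt (∑ j, P i j * z j) := h1
    _ = Real.sqrt (P.mulVec x i * P.mulVec z i) := by
        rw [← Real.sqrt_mul (Finset.sum_nonneg fun j _ => mul_nonneg (hP i j) (hx j))]
        rfl
end

section
/- Let P be an I×J matrix with nonnegative entries whose columns each sum to 1. Then for all nonnegative vectors x, z ∈ ℝ^J: H(x,z) ≥ H(Px, Pz), where H(u,v) = ∑_n (√u_n - √v_n)² is the Hellinger distance. -/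
theorem stmt_18 {I J : ℕ} (P : Matrix (Fin I) (Fin J) ℝ)
    (hP : ∀ i j, 0 ≤ P i j) (hcol : ∀ j, ∑ i, P i j = 1)
    (x z : Fin J → ℝ) (hx : ∀ j, 0 ≤ x j) (hz : ∀ j, 0 ≤ z j) :
    ∑ i, (Real.sqrt (P.mulVec x i) - Real.sqrt (P.mulVec z i)) ^ 2 ≤
      ∑ j, (Real.sqrt (x j) - Real.sqrt (z j)) ^ 2 := by
  have hPx : ∀ i, 0 ≤ P.mulVec x i := fun i => by
    simp only [Matrix.mulVec, dotProduct]
    exact Finset.sum_nonneg fun j _ => mul_nonneg (hP i j) (hx j)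
  have hPz : ∀ i, 0 ≤ P.mulVec z i := fun i => by
    simp only [Matrix.mulVec, dotProduct]
    exact Finset.sum_nonneg fun j _ => mul_nonneg (hP i j) (hz j)
  have expand : ∀ a b : ℝ, 0 ≤ a → 0 ≤ b →
      (Real.sqrt a - Real.sqrt b) ^ 2 = a + b - 2 * Real.sqrt (a * b) := by
    intro a b ha hb
    rw [sub_sq, Real.sq_sqrt ha, Real.sq_sqrt hb, Real.sqrt_mul ha]
    ring
  have sumPx : ∑ i, P.mulVec x i = ∑ j, x j := by
    simp only [Matrix.mulVec, dotProduct]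
    rw [Finset.sum_comm]
    exact Finset.sum_congr rfl fun j _ => by rw [← Finset.sum_mul, hcol j, one_mul]
  have sumPz : ∑ i, P.mulVec z i = ∑ j, z j := by
    simp only [Matrix.mulVec, dotProduct]
    rw [Finset.sum_comm]
    exact Finset.sum_congr rfl fun j _ => by rw [← Finset.sum_mul, hcol j, one_mul]
  have key : ∑ j, Real.sqrt (x j * z j) ≤ ∑ i, Real.sqrt (P.mulVec x i * P.mulVec z i) := by
    calc ∑ j, Real.sqrt (x j * z j)
        = ∑ j, (∑ i, P i j) * Real.sqrt (x j * z j) := by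
          simp [hcol]
      _ = ∑ i, ∑ j, P i j * Real.sqrt (x j * z j) := by
          simp_rw [Finset.sum_mul]; rw [Finset.sum_comm]
      _ ≤ ∑ i, Real.sqrt (P.mulVec x i * P.mulVec z i) := by
          refine Finset.sum_le_sum fun i _ => ?_
          have hcs := Finset.sum_sq_le_sum_mul_sum_of_sq_eq_mul Finset.univ
            (r := fun j => P i j * Real.sqrt (x j * z j))
            (f := fun j => P i j * x j) (g := fun j => P i j * z j)
            (fun j _ => mul_nonneg (hP i j) (hx j))
            (fun j _ => mul_nonneg (hP i j) (hz j))
            (fun j _ => by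
              rw [mul_pow, Real.sq_sqrt (mul_nonneg (hx j) (hz j))]; ring)
          have hr : 0 ≤ ∑ j, P i j * Real.sqrt (x j * z j) :=
            Finset.sum_nonneg fun j _ => mul_nonneg (hP i j) (Real.sqrt_nonneg _)
          have := Real.sqrt_le_sqrt hcs
          rwa [Real.sqrt_sq hr] at this
  calc ∑ i, (Real.sqrt (P.mulVec x i) - Real.sqrt (P.mulVec z i)) ^ 2
      = ∑ i, (P.mulVec x i + P.mulVec z i - 2 * Real.sqrt (P.mulVec x i * P.mulVec z i)) := by
        exact Finset.sum_congr rfl fun i _ => expand _ _ (hPx i) (hPz i)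
    _ = (∑ j, x j) + (∑ j, z j) - 2 * ∑ i, Real.sqrt (P.mulVec x i * P.mulVec z i) := by
        rw [Finset.sum_sub_distrib, Finset.sum_add_distrib, sumPx, sumPz, ← Finset.mul_sum]
    _ ≤ (∑ j, x j) + (∑ j, z j) - 2 * ∑ j, Real.sqrt (x j * z j) := by linarith
    _ = ∑ j, (Real.sqrt (x j) - Real.sqrt (z j)) ^ 2 := by
        have h : ∑ j, (Real.sqrt (x j) - Real.sqrt (z j)) ^ 2
            = ∑ j, (x j + z j - 2 * Real.sqrt (x j * z j)) :=
          Finset.sum_congr rfl fun j _ => expand _ _ (hx j) (hz j)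
        rw [h, Finset.sum_sub_distrib, Finset.sum_add_distrib, ← Finset.mul_sum]
end
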